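/- For every integer ℓ ≥ 7, (4ℓ)! · (ℓ!)⁴ / ((2ℓ)!)⁴ ≤ ℓ/2. -/
import Mathlib

lemma stmt_15_aux (ℓ : ℕ) (hℓ : 7 ≤ ℓ) :
    2 * Nat.factorial (4 * ℓ) * (Nat.factorial ℓ) ^ 4 ≤ ℓ * (Nat.factorial (2 * ℓ)) ^ 4 := by
  induction ℓ, hℓ using Nat.le_induction with
  | base => decide
  | succ n hn ih =>
    have h4 : Nat.factorial (4 * (n + 1))
        = (4*n+4) * ((4*n+3) * ((4*n+2) * ((4*n+1) * Nat.factorial (4*n)))) := by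
      rw [show 4 * (n+1) = (4*n+3)+1 by ring, Nat.factorial_succ,
        show 4*n+3 = (4*n+2)+1 by ring, Nat.factorial_succ,
        show 4*n+2 = (4*n+1)+1 by ring, Nat.factorial_succ,
        show 4*n+1 = (4*n)+1 by ring, Nat.factorial_succ]
    have h2 : Nat.factorial (2 * (n + 1))
        = (2*n+2) * ((2*n+1) * Nat.factorial (2*n)) := by
      rw [show 2 * (n+1) = (2*n+1)+1 by ring, Nat.factorial_succ,
        show 2*n+1 = (2*n)+1 by ring, Nat.factorial_succ]
    have h1 : Nat.factorial (n + 1) = (n+1) * Nat.factorial n := Nat.factorial_succ n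
    rw [h4, h2, h1]
    have key : n * ((4*n+4) * ((4*n+3) * ((4*n+2) * (4*n+1))) * (n+1)^4)
        ≤ (n+1) * ((2*n+2) * (2*n+1))^4 := by
      have hid : n * ((4*n+4) * ((4*n+3) * ((4*n+2) * (4*n+1))) * (n+1)^4)
          + 8*(n+1)^5*(2*n+1)*(8*n^2+9*n+2)
          = (n+1) * ((2*n+2) * (2*n+1))^4 := by ring
      omega
    calc 2 * ((4*n+4) * ((4*n+3) * ((4*n+2) * ((4*n+1) * Nat.factorial (4*n))))) *
          ((n+1) * Nat.factorial n)^4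
        = ((4*n+4) * ((4*n+3) * ((4*n+2) * (4*n+1))) * (n+1)^4)
            * (2 * Nat.factorial (4*n) * (Nat.factorial n)^4) := by ring
      _ ≤ ((4*n+4) * ((4*n+3) * ((4*n+2) * (4*n+1))) * (n+1)^4)
            * (n * (Nat.factorial (2*n))^4) := Nat.mul_le_mul_left _ ih
      _ = n * ((4*n+4) * ((4*n+3) * ((4*n+2) * (4*n+1))) * (n+1)^4)
            * (Nat.factorial (2*n))^4 := by ring
      _ ≤ (n+1) * ((2*n+2) * (2*n+1))^4 * (Nat.factorial (2*n))^4 :=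
            Nat.mul_le_mul_right _ key
      _ = (n+1) * ((2*n+2) * ((2*n+1) * Nat.factorial (2*n)))^4 := by ring

theorem stmt_15 (ℓ : ℕ) (hℓ : 7 ≤ ℓ) :
    ((Nat.factorial (4 * ℓ) : ℚ) * (Nat.factorial ℓ : ℚ) ^ 4)
        / ((Nat.factorial (2 * ℓ) : ℚ)) ^ 4 ≤ (ℓ : ℚ) / 2 := by
  have hpos : (0 : ℚ) < ((Nat.factorial (2 * ℓ) : ℚ)) ^ 4 := by
    positivity
  rw [div_le_div_iff₀ hpos (by norm_num : (0:ℚ) < 2)]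
  have := stmt_15_aux ℓ hℓ
  have h' : ((2 * Nat.factorial (4 * ℓ) * (Nat.factorial ℓ) ^ 4 : ℕ) : ℚ)
      ≤ ((ℓ * (Nat.factorial (2 * ℓ)) ^ 4 : ℕ) : ℚ) := by exact_mod_cast this
  push_cast at h'
  linarith
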